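/- Conservatism of the state-distribution safety monitor conditioned on the monitor's reported value (Theorem 1, monitor-value form): Let (Ω, ℱ, P) be a probability space, S a finite type, X : Ω → S a measurable random variable (the true state), A a measurable event (the event that the system is safe), G : S → ℝ a function (the lookup table of verified safety lower bounds), and D : Ω → (S → ℝ) a measurable state-distribution estimator taking finitely many values, with (D ω) s ≥ 0 for all s and ∑_{s∈S} (D ω) s = 1 for every ω. Define the monitor output M : Ω → ℝ by M(ω) = ∑_{s∈S} (D ω) s · G s. Suppose that for every d in the range of D with P(D = d) > 0: (calibration) for every s ∈ S, P({X = s} | {D = d}) = d s; and (conditional independence) for every s ∈ S with P({X = s} ∩ {D = d}) > 0, P(A | {X = s} ∩ {D = d}) = P(A | {X = s}). Suppose also (model conservatism) that for every s ∈ S with P({X = s}) > 0, P(A | {X = s}) ≥ G s. Then for every p ∈ ℝ with P(M = p) > 0, P(A | {M = p}) ≥ p. -/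

import Mathlib

open ProbabilityTheory MeasureTheory

/-- Conservatism of the state-distribution safety monitor conditioned on the monitor's
reported value: with monitor output `M ω = ∑ s, (D ω) s * G s`, if `D` is well-calibrated
at every value of positive probability, safety `A` is conditionally independent of the
estimator output given the true state `X`, and the lookup table `G` lower-bounds the
true conditional safety probabilities, then `P(A | M = p) ≥ p` whenever `P(M = p) > 0`. -/
theorem monitor_conservative_given_monitor_value
    {Ω : Type*} [MeasurableSpace Ω] (P : Measure Ω) [IsProbabilityMeasure P]
    {S : Type*} [Fintype S] [MeasurableSpace S] [MeasurableSingletonClass S]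
    (X : Ω → S) (hX : Measurable X)
    (A : Set Ω) (hA : MeasurableSet A)
    (G : S → ℝ)
    (D : Ω → (S → ℝ)) (hD : Measurable D) (hDfin : (Set.range D).Finite)
    (hDnonneg : ∀ ω s, 0 ≤ D ω s) (hDsum : ∀ ω, ∑ s : S, D ω s = 1)
    (M : Ω → ℝ) (hM : ∀ ω, M ω = ∑ s : S, D ω s * G s)
    (hcal : ∀ d ∈ Set.range D, 0 < P (D ⁻¹' {d}) →
      ∀ s : S, (P[X ⁻¹' {s} | D ⁻¹' {d}]).toReal = d s)
    (hindep : ∀ d ∈ Set.range D, 0 < P (D ⁻¹' {d}) →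
      ∀ s : S, 0 < P (X ⁻¹' {s} ∩ D ⁻¹' {d}) →
        P[A | X ⁻¹' {s} ∩ D ⁻¹' {d}] = P[A | X ⁻¹' {s}])
    (hcons : ∀ s : S, 0 < P (X ⁻¹' {s}) → (P[A | X ⁻¹' {s}]).toReal ≥ G s) :
    ∀ p : ℝ, 0 < P (M ⁻¹' {p}) → (P[A | M ⁻¹' {p}]).toReal ≥ p := by
  classical
  intro p hp
  set f : (S → ℝ) → ℝ := fun d => ∑ s : S, d s * G s with hf
  have hsing : ∀ d : S → ℝ, MeasurableSet ({d} : Set (S → ℝ)) := fun d => by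
    rw [← Set.univ_pi_singleton d]
    exact MeasurableSet.univ_pi fun s => measurableSet_singleton _
  have hEd : ∀ d : S → ℝ, MeasurableSet (D ⁻¹' {d}) := fun d => hD (hsing d)
  have hXs : ∀ s : S, MeasurableSet (X ⁻¹' {s}) := fun s => hX (measurableSet_singleton s)
  set T : Finset (S → ℝ) := hDfin.toFinset.filter (fun d => f d = p) with hT
  have hMp : M ⁻¹' {p} = ⋃ d ∈ T, D ⁻¹' {d} := by
    ext ω
    simp only [Set.mem_preimage, Set.mem_singleton_iff, Set.mem_iUnion, hT,
      Finset.mem_filter, Set.Finite.mem_toFinset, Set.mem_range, exists_prop]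
    constructor
    · intro h
      exact ⟨D ω, ⟨⟨ω, rfl⟩, by rw [← h, hM ω]⟩, rfl⟩
    · rintro ⟨d, ⟨_, hdp⟩, hω⟩
      rw [hM ω, hω]
      exact hdp
  have hMpMeas : MeasurableSet (M ⁻¹' {p}) := by
    rw [hMp]; exact Finset.measurableSet_biUnion T fun d _ => hEd d
  have hdisj : (T : Set (S → ℝ)).PairwiseDisjoint fun d => D ⁻¹' {d} := by
    intro a _ b _ hab
    exact Set.disjoint_left.2 fun ω ha hb => hab (ha.symm.trans hb)
  -- key per-d inequality
  have key : ∀ d ∈ T, f d * (P (D ⁻¹' {d})).toReal ≤ (P (D ⁻¹' {d} ∩ A)).toReal := by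
    intro d hdT
    rcases eq_or_lt_of_le (show 0 ≤ P (D ⁻¹' {d}) from zero_le) with h0 | hpos
    · have h1 : P (D ⁻¹' {d} ∩ A) = 0 :=
        le_antisymm (le_trans (measure_mono Set.inter_subset_left) h0.symm.le) zero_le
      rw [← h0, h1]
      simp
    · have hdr : d ∈ Set.range D := by
        have := (Finset.mem_filter.1 hdT).1
        exact hDfin.mem_toFinset.1 this
      have hfp : f d = p := (Finset.mem_filter.1 hdT).2
      set Ed := D ⁻¹' {d} with hEdd
      -- calibration: P(Ed ∩ Xs) = d s * P Ed
      have hcal' : ∀ s : S, (P (Ed ∩ X ⁻¹' {s})).toReal = d s * (P Ed).toReal := by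
        intro s
        have := hcal d hdr hpos s
        rw [cond_apply (hEd d) P] at this
        rw [ENNReal.toReal_mul, ENNReal.toReal_inv] at this
        have hEne : (P Ed).toReal ≠ 0 :=
          ENNReal.toReal_ne_zero.2 ⟨hpos.ne', measure_ne_top P _⟩
        field_simp at this ⊢
        rw [← hEdd] at this
        rw [div_eq_iff hEne] at this
        linarith [this]
      -- decompose Ed ∩ A over values of X
      have hdecomp : Ed ∩ A = ⋃ s ∈ (Finset.univ : Finset S), (X ⁻¹' {s} ∩ (Ed ∩ A)) := by
        ext ω; simp
      have hsum : P (Ed ∩ A) = ∑ s : S, P (X ⁻¹' {s} ∩ (Ed ∩ A)) := by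
        conv_lhs => rw [hdecomp]
        exact measure_biUnion_finset (fun a _ b _ hab => Set.disjoint_left.2
            fun ω hωa hωb => hab (hωa.1.symm.trans hωb.1))
          (fun s _ => (hXs s).inter ((hEd d).inter hA))
      have hterm : ∀ s : S, G s * (d s * (P Ed).toReal)
          ≤ (P (X ⁻¹' {s} ∩ (Ed ∩ A))).toReal := by
        intro s
        rcases eq_or_lt_of_le (show 0 ≤ P (X ⁻¹' {s} ∩ Ed) from zero_le) with h0 | hspos
        · have hz : d s * (P Ed).toReal = 0 := by
            rw [← hcal' s, Set.inter_comm, ← h0, ENNReal.toReal_zero]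
          have h1 : P (X ⁻¹' {s} ∩ (Ed ∩ A)) = 0 :=
            le_antisymm (le_trans (measure_mono (by
              intro ω hω; exact ⟨hω.1, hω.2.1⟩)) h0.symm.le) zero_le
          rw [hz, mul_zero]
          exact ENNReal.toReal_nonneg
        · have hXpos : 0 < P (X ⁻¹' {s}) :=
            lt_of_lt_of_le hspos (measure_mono Set.inter_subset_left)
          have hci := hindep d hdr hpos s hspos
          have hca : P[A | X ⁻¹' {s} ∩ Ed]
              = (P (X ⁻¹' {s} ∩ Ed))⁻¹ * P ((X ⁻¹' {s} ∩ Ed) ∩ A) :=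
            cond_apply ((hXs s).inter (hEd d)) P A
          have hge : G s ≤ (P[A | X ⁻¹' {s} ∩ Ed]).toReal := by
            rw [hci]; exact hcons s hXpos
          have hne : (P (X ⁻¹' {s} ∩ Ed)) ≠ 0 := hspos.ne'
          have hnt : (P (X ⁻¹' {s} ∩ Ed)) ≠ ⊤ := measure_ne_top P _
          have hval : (P[A | X ⁻¹' {s} ∩ Ed]).toReal * (P (X ⁻¹' {s} ∩ Ed)).toReal
              = (P ((X ⁻¹' {s} ∩ Ed) ∩ A)).toReal := by
            rw [hca, ENNReal.toReal_mul, ENNReal.toReal_inv]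
            have : (P (X ⁻¹' {s} ∩ Ed)).toReal ≠ 0 :=
              ENNReal.toReal_ne_zero.2 ⟨hne, hnt⟩
            field_simp
          have hseteq : (X ⁻¹' {s} ∩ Ed) ∩ A = X ⁻¹' {s} ∩ (Ed ∩ A) := by
            rw [Set.inter_assoc]
          have hcalrw : d s * (P Ed).toReal = (P (X ⁻¹' {s} ∩ Ed)).toReal := by
            rw [← hcal' s, Set.inter_comm]
          rw [hcalrw, ← hseteq, ← hval]
          exact mul_le_mul_of_nonneg_right hge ENNReal.toReal_nonneg
      have hsumR : (P (Ed ∩ A)).toReal = ∑ s : S, (P (X ⁻¹' {s} ∩ (Ed ∩ A))).toReal := by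
        rw [hsum, ENNReal.toReal_sum fun s _ => measure_ne_top P _]
      calc f d * (P Ed).toReal = ∑ s : S, G s * (d s * (P Ed).toReal) := by
            rw [hf]; rw [Finset.sum_mul]; apply Finset.sum_congr rfl; intro s _; ring
        _ ≤ ∑ s : S, (P (X ⁻¹' {s} ∩ (Ed ∩ A))).toReal :=
            Finset.sum_le_sum fun s _ => hterm s
        _ = (P (Ed ∩ A)).toReal := hsumR.symm
  -- assemble
  have hPMp : P (M ⁻¹' {p}) = ∑ d ∈ T, P (D ⁻¹' {d}) := by
    rw [hMp, measure_biUnion_finset hdisj fun d _ => hEd d]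
  have hMpA : M ⁻¹' {p} ∩ A = ⋃ d ∈ T, (D ⁻¹' {d} ∩ A) := by
    rw [hMp, Set.iUnion₂_inter]
  have hPMpA : P (M ⁻¹' {p} ∩ A) = ∑ d ∈ T, P (D ⁻¹' {d} ∩ A) := by
    rw [hMpA, measure_biUnion_finset
      (fun a ha b hb hab => Set.disjoint_left.2 fun ω hωa hωb =>
        Set.disjoint_left.1 (hdisj ha hb hab) hωa.1 hωb.1)
      fun d _ => (hEd d).inter hA]
  have hmain : p * (P (M ⁻¹' {p})).toReal ≤ (P (M ⁻¹' {p} ∩ A)).toReal := by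
    rw [hPMp, hPMpA, ENNReal.toReal_sum fun d _ => measure_ne_top P _,
      ENNReal.toReal_sum fun d _ => measure_ne_top P _, Finset.mul_sum]
    apply Finset.sum_le_sum
    intro d hdT
    have hfp : f d = p := (Finset.mem_filter.1 hdT).2
    rw [← hfp]
    exact key d hdT
  have hcond : (P[A | M ⁻¹' {p}]).toReal
      = (P (M ⁻¹' {p} ∩ A)).toReal / (P (M ⁻¹' {p})).toReal := by
    rw [cond_apply hMpMeas P, ENNReal.toReal_mul, ENNReal.toReal_inv,
      div_eq_inv_mul]
  rw [hcond, ge_iff_le, le_div_iff₀]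
  · linarith [hmain]
  · exact ENNReal.toReal_pos hp.ne' (measure_ne_top P _)
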